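/- arXiv:1207.2125 — 2 statements merged into one kernel-verified Lean document; each statement's English description precedes it below -/
import Mathlib

section
/- (Monotonicity) Consider local search allocation with a fixed deterministic tie-breaking rule. Let X^(k) be the load vector after allocating k balls with birthplaces u_1,...,u_k, and Z^(i,k) the load vector after allocating the k−1 balls obtained by removing the i-th ball (birthplaces u_1,...,u_{i-1},u_{i+1},...,u_k). Then Σ_{v ∈ V} |X_v^(k) − Z_v^(i,k)| = 1; in particular Z_v^(i,k) ≤ X_v^(k) for all v (removing a ball never increases any load). -/
open Finset

variable {V : Type*} [Fintype V] [DecidableEq V]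

/-- One step of the local search from `u` with current loads `x`:
among the neighbors of `u` (listed in the tie-breaking order `ξ u`) that have load
strictly smaller than `x u`, move to the first one of minimal load; if there is no
such neighbor, stay at `u` (i.e. `u` is a local minimum). -/
def lsNext (G : SimpleGraph V) [DecidableRel G.Adj] (ξ : V → List V)
    (x : V → ℕ) (u : V) : V :=
  ((((ξ u).filter (fun w => decide (G.Adj u w ∧ x w < x u)))).argmin x).getD u

/-- Iterate the local search for at most `n` steps (stopping at a local minimum). -/
def lsIter (G : SimpleGraph V) [DecidableRel G.Adj] (ξ : V → List V)
    (x : V → ℕ) : ℕ → V → V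
  | 0, u => u
  | n + 1, u => if lsNext G ξ x u = u then u else lsIter G ξ x n (lsNext G ξ x u)

/-- The vertex where a ball born at `u` is placed: since each local-search step strictly
decreases the load, `x u` steps always suffice to reach a local minimum. -/
def lsPlace (G : SimpleGraph V) [DecidableRel G.Adj] (ξ : V → List V)
    (x : V → ℕ) (u : V) : V :=
  lsIter G ξ x (x u) u

/-- Add one ball born at `u` to the load vector `x`. -/
def lsAdd (G : SimpleGraph V) [DecidableRel G.Adj] (ξ : V → List V)
    (x : V → ℕ) (u : V) : V → ℕ :=
  fun v => x v + if v = lsPlace G ξ x u then 1 else 0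

/-- The load vector after allocating the balls with birthplaces `bs` (in order) by
local search allocation with the deterministic tie-breaking rule `ξ`. -/
def lsLoads (G : SimpleGraph V) [DecidableRel G.Adj] (ξ : V → List V)
    (bs : List V) : V → ℕ :=
  bs.foldl (lsAdd G ξ) (fun _ => 0)

set_option linter.unusedSectionVars false
set_option linter.unusedVariables false
set_option maxHeartbeats 1000000

section Aux

variable {G : SimpleGraph V} [DecidableRel G.Adj] {ξ : V → List V} {x y : V → ℕ} {u w : V}

def lsCand (G : SimpleGraph V) [DecidableRel G.Adj] (ξ : V → List V)
    (x : V → ℕ) (u : V) : List V :=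
  (ξ u).filter (fun w => decide (G.Adj u w ∧ x w < x u))

variable {G : SimpleGraph V} [DecidableRel G.Adj] {ξ : V → List V} {x y : V → ℕ} {u w : V}

lemma lsNext_eq : lsNext G ξ x u = ((lsCand G ξ x u).argmin x).getD u := rfl

lemma mem_lsCand {v : V} : v ∈ lsCand G ξ x u ↔ v ∈ ξ u ∧ G.Adj u v ∧ x v < x u := by
  simp [lsCand, List.mem_filter]

lemma lsNext_mem (h : lsNext G ξ x u ≠ u) : lsNext G ξ x u ∈ lsCand G ξ x u := by
  rw [lsNext_eq] at *
  rcases hA : (lsCand G ξ x u).argmin x with _ | a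
  · simp [hA] at h
  · simpa using List.argmin_mem hA

lemma lsCand_eq_nil_of_fix (h : lsNext G ξ x u = u) : lsCand G ξ x u = [] := by
  rw [lsNext_eq] at h
  rcases hA : (lsCand G ξ x u).argmin x with _ | a
  · exact List.argmin_eq_none.mp hA
  · exfalso
    rw [hA] at h; simp at h
    have := List.argmin_mem hA
    rw [h] at this
    exact absurd (mem_lsCand.mp this).2.2 (lt_irrefl _)

lemma lsIter_of_nil (h : lsCand G ξ x u = []) : ∀ m, lsIter G ξ x m u = u := by
  have hfix : lsNext G ξ x u = u := by simp [lsNext_eq, h]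
  intro m; cases m <;> simp [lsIter, hfix]

lemma lsNext_lt (h : lsNext G ξ x u ≠ u) : x (lsNext G ξ x u) < x u :=
  (mem_lsCand.mp (lsNext_mem h)).2.2

lemma lsCand_eq_nil_of_zero (h : x u = 0) : lsCand G ξ x u = [] := by
  rw [List.eq_nil_iff_forall_not_mem]
  intro v hv
  have := (mem_lsCand.mp hv).2.2
  omega

lemma lsIter_add : ∀ (m : ℕ) (u : V) (k : ℕ), x u ≤ m →
    lsIter G ξ x (m + k) u = lsIter G ξ x m u := by
  intro m
  induction m with
  | zero =>
    intro u k h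
    rw [lsIter_of_nil (lsCand_eq_nil_of_zero (Nat.le_zero.mp h)),
      lsIter_of_nil (lsCand_eq_nil_of_zero (Nat.le_zero.mp h))]
  | succ m ih =>
    intro u k h
    by_cases hfix : lsNext G ξ x u = u
    · rw [lsIter_of_nil (lsCand_eq_nil_of_fix hfix), lsIter_of_nil (lsCand_eq_nil_of_fix hfix)]
    · have hlt := lsNext_lt hfix
      have h1 : m + 1 + k = (m + k) + 1 := by omega
      rw [h1]
      show (if lsNext G ξ x u = u then u else lsIter G ξ x (m+k) (lsNext G ξ x u)) = _
      rw [if_neg hfix]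
      show _ = (if lsNext G ξ x u = u then u else lsIter G ξ x m (lsNext G ξ x u))
      rw [if_neg hfix]
      exact ih _ k (by omega)

lemma lsIter_eq_lsPlace (m : ℕ) (h : x u ≤ m) : lsIter G ξ x m u = lsPlace G ξ x u := by
  obtain ⟨k, rfl⟩ := Nat.exists_eq_add_of_le h
  exact lsIter_add (x u) u k le_rfl

lemma lsCand_lsIter_eq_nil : ∀ (m : ℕ) (u : V), x u ≤ m →
    lsCand G ξ x (lsIter G ξ x m u) = [] := by
  intro m
  induction m with
  | zero =>
    intro u h
    show lsCand G ξ x u = []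
    exact lsCand_eq_nil_of_zero (Nat.le_zero.mp h)
  | succ m ih =>
    intro u h
    by_cases hfix : lsNext G ξ x u = u
    · rw [lsIter_of_nil (lsCand_eq_nil_of_fix hfix)]
      exact lsCand_eq_nil_of_fix hfix
    · have hlt := lsNext_lt hfix
      show lsCand G ξ x (if lsNext G ξ x u = u then u else lsIter G ξ x m (lsNext G ξ x u)) = []
      rw [if_neg hfix]
      exact ih _ (by omega)

lemma lsCand_lsPlace_eq_nil : lsCand G ξ x (lsPlace G ξ x u) = [] :=
  lsCand_lsIter_eq_nil (x u) u le_rfl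

lemma lsPlace_localMin (hξ : ∀ v, (ξ v).Nodup ∧ ∀ w, w ∈ ξ v ↔ G.Adj v w)
    {v : V} (hadj : G.Adj (lsPlace G ξ x u) v) : x (lsPlace G ξ x u) ≤ x v := by
  by_contra h
  have hv : v ∈ lsCand G ξ x (lsPlace G ξ x u) :=
    mem_lsCand.mpr ⟨((hξ _).2 v).mpr hadj, hadj, by omega⟩
  rw [lsCand_lsPlace_eq_nil] at hv
  exact absurd hv (List.not_mem_nil)

lemma lsPlace_step (h : lsNext G ξ x u ≠ u) :
    lsPlace G ξ x u = lsPlace G ξ x (lsNext G ξ x u) := by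
  have hlt := lsNext_lt h
  obtain ⟨m, hm⟩ : ∃ m, x u = m + 1 := ⟨x u - 1, by omega⟩
  show lsIter G ξ x (x u) u = _
  rw [hm]
  show (if lsNext G ξ x u = u then u else lsIter G ξ x m (lsNext G ξ x u)) = _
  rw [if_neg h]
  exact lsIter_eq_lsPlace m (by omega)

lemma indexOf_filter_mono {α : Type*} [DecidableEq α] (p : α → Bool) :
    ∀ (l : List α) {n a : α}, n ∈ l.filter p → a ∈ l.filter p →
      l.idxOf n ≤ l.idxOf a → (l.filter p).idxOf n ≤ (l.filter p).idxOf a := by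
  intro l
  induction l with
  | nil => intro n a hn _ _; simp at hn
  | cons b t ih =>
    intro n a hn ha hle
    by_cases hpb : p b
    · rw [List.filter_cons_of_pos hpb] at *
      by_cases hnb : n = b
      · subst hnb; simp [List.idxOf_cons_self]
      · by_cases hab : a = b
        · exfalso
          subst hab
          rw [List.idxOf_cons_self] at hle
          rw [List.idxOf_cons_ne _ (Ne.symm hnb)] at hle
          omega
        · rw [List.idxOf_cons_ne _ (Ne.symm hnb), List.idxOf_cons_ne _ (Ne.symm hab)] at hle ⊢
          have := ih (by simpa [hnb] using hn) (by simpa [hab] using ha) (by omega)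
          omega
    · rw [List.filter_cons_of_neg hpb] at *
      have hnb : n ≠ b := fun h => hpb (h ▸ (List.mem_filter.mp hn).2)
      have hab : a ≠ b := fun h => hpb (h ▸ (List.mem_filter.mp ha).2)
      rw [List.idxOf_cons_ne _ (Ne.symm hnb), List.idxOf_cons_ne _ (Ne.symm hab)] at hle
      exact ih hn ha (by omega)

/-- The invariant: `x` exceeds `y` by exactly one ball sitting at `w`,
and `w` is a weak local minimum of `y`. -/
def lsInv (G : SimpleGraph V) [DecidableRel G.Adj] (x y : V → ℕ) (w : V) : Prop :=
  (∀ v, x v = y v + if v = w then 1 else 0) ∧ ∀ v, G.Adj w v → y w ≤ y v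

lemma lsInv.cand_subset (hInv : lsInv G x y w) (huw : u ≠ w) {v : V}
    (hv : v ∈ lsCand G ξ x u) : v ∈ lsCand G ξ y u := by
  obtain ⟨hmem, hadj, hlt⟩ := mem_lsCand.mp hv
  refine mem_lsCand.mpr ⟨hmem, hadj, ?_⟩
  have h1 := hInv.1 v
  have h2 := hInv.1 u
  rw [if_neg huw] at h2
  by_cases hvw : v = w
  · rw [if_pos hvw] at h1; omega
  · rw [if_neg hvw] at h1; omega

lemma lsInv.cand_w_nil (hξ : ∀ v, (ξ v).Nodup ∧ ∀ w, w ∈ ξ v ↔ G.Adj v w)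
    (hInv : lsInv G x y w) : lsCand G ξ y w = [] := by
  rw [List.eq_nil_iff_forall_not_mem]
  intro v hv
  obtain ⟨_, hadj, hlt⟩ := mem_lsCand.mp hv
  exact absurd (hInv.2 v hadj) (by omega)

/-- Key step lemma: if the `y`-walk moves from `u ≠ w` to `n ∉ {u, w}`, then
the `x`-walk makes the same move. -/
lemma lsInv.next_eq (hξ : ∀ v, (ξ v).Nodup ∧ ∀ w, w ∈ ξ v ↔ G.Adj v w)
    (hInv : lsInv G x y w) (huw : u ≠ w)
    (hnu : lsNext G ξ y u ≠ u) (hnw : lsNext G ξ y u ≠ w) :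
    lsNext G ξ x u = lsNext G ξ y u := by
  set n := lsNext G ξ y u with hn
  have hxu : x u = y u := by have := hInv.1 u; rw [if_neg huw] at this; omega
  have hxn : x n = y n := by have := hInv.1 n; rw [if_neg hnw] at this; omega
  -- argmin on the y-side
  have hA : (lsCand G ξ y u).argmin y = some n := by
    rcases hA : (lsCand G ξ y u).argmin y with _ | a
    · exfalso; apply hnu; rw [hn, lsNext_eq, hA]; rfl
    · rw [hn, lsNext_eq, hA]; rfl
  have hnmemA : n ∈ (lsCand G ξ y u).argmin y := by rw [hA]; rfl
  have hn_mem : n ∈ lsCand G ξ y u := List.argmin_mem hnmemA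
  have hmin : ∀ a ∈ lsCand G ξ y u, y n ≤ y a := fun a ha =>
    List.le_of_mem_argmin ha hnmemA
  -- candidate list relation
  have himp : ∀ v : V, (decide (G.Adj u v ∧ x v < x u) = true) →
      (decide (G.Adj u v ∧ y v < y u) = true) := by
    intro v hv
    rw [decide_eq_true_iff] at hv ⊢
    refine ⟨hv.1, ?_⟩
    have h1 := hInv.1 v
    by_cases hvw : v = w
    · rw [if_pos hvw] at h1; omega
    · rw [if_neg hvw] at h1; omega
  have hcand : lsCand G ξ x u
      = (lsCand G ξ y u).filter (fun v => decide (G.Adj u v ∧ x v < x u)) := by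
    show (ξ u).filter _ = ((ξ u).filter _).filter _
    rw [List.filter_filter]
    refine (List.filter_congr ?_).symm
    intro a _
    rcases hb : decide (G.Adj u a ∧ x a < x u) with _ | _
    · simp
    · simp [himp a hb]
  -- n is a candidate for x
  have hn_memx : n ∈ lsCand G ξ x u := by
    obtain ⟨h1, h2, h3⟩ := mem_lsCand.mp hn_mem
    exact mem_lsCand.mpr ⟨h1, h2, by omega⟩
  -- show argmin on the x-side is n
  have hgoal : (lsCand G ξ x u).argmin x = some n := by
    rw [List.argmin_eq_some_iff]
    refine ⟨hn_memx, ?_, ?_⟩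
    · intro a ha
      have hay := hInv.cand_subset huw ha
      by_cases haw : a = w
      · subst haw
        have h1 := hInv.1 a
        rw [if_pos rfl] at h1
        have := hmin a hay
        omega
      · have h1 := hInv.1 a
        rw [if_neg haw] at h1
        have := hmin a hay
        omega
    · intro a ha hle
      have hay := hInv.cand_subset huw ha
      have haw : a ≠ w := by
        intro haw
        subst haw
        have h1 := hInv.1 a
        rw [if_pos rfl] at h1
        have := hmin a hay
        omega
      have h1 := hInv.1 a
      rw [if_neg haw] at h1
      have hidx : (lsCand G ξ y u).idxOf n ≤ (lsCand G ξ y u).idxOf a :=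
        List.index_of_argmin hnmemA hay (by omega)
      rw [hcand]
      rw [hcand] at ha
      exact indexOf_filter_mono _ _ (hcand ▸ hn_memx) ha hidx
  rw [lsNext_eq, hgoal]; rfl

/-- Key walk lemma: either the two walks end at the same vertex,
or the `y`-walk ends at `w`. -/
lemma lsInv.place (hξ : ∀ v, (ξ v).Nodup ∧ ∀ w, w ∈ ξ v ↔ G.Adj v w)
    (hInv : lsInv G x y w) :
    ∀ (N : ℕ) (u : V), y u ≤ N →
      lsPlace G ξ x u = lsPlace G ξ y u ∨ lsPlace G ξ y u = w := by
  intro N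
  induction N with
  | zero =>
    intro u hN
    by_cases huw : u = w
    · subst huw
      right
      exact lsIter_of_nil (hInv.cand_w_nil hξ) _
    · left
      have h1 : lsCand G ξ y u = [] := lsCand_eq_nil_of_zero (Nat.le_zero.mp hN)
      have h2 : lsCand G ξ x u = [] := by
        rw [List.eq_nil_iff_forall_not_mem]
        intro v hv
        have := hInv.cand_subset huw hv
        rw [h1] at this
        exact absurd this (List.not_mem_nil)
      rw [show lsPlace G ξ x u = lsIter G ξ x (x u) u from rfl, lsIter_of_nil h2,
        show lsPlace G ξ y u = lsIter G ξ y (y u) u from rfl, lsIter_of_nil h1]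
  | succ N ih =>
    intro u hN
    by_cases huw : u = w
    · subst huw
      right
      exact lsIter_of_nil (hInv.cand_w_nil hξ) _
    by_cases hfix : lsNext G ξ y u = u
    · left
      have h1 : lsCand G ξ y u = [] := lsCand_eq_nil_of_fix hfix
      have h2 : lsCand G ξ x u = [] := by
        rw [List.eq_nil_iff_forall_not_mem]
        intro v hv
        have := hInv.cand_subset huw hv
        rw [h1] at this
        exact absurd this (List.not_mem_nil)
      rw [show lsPlace G ξ x u = lsIter G ξ x (x u) u from rfl, lsIter_of_nil h2,
        show lsPlace G ξ y u = lsIter G ξ y (y u) u from rfl, lsIter_of_nil h1]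
    by_cases hnw : lsNext G ξ y u = w
    · right
      rw [lsPlace_step hfix, hnw]
      exact lsIter_of_nil (hInv.cand_w_nil hξ) _
    · have hnext := hInv.next_eq hξ huw hfix hnw
      have hylt := lsNext_lt hfix
      have hxu : x u = y u := by have := hInv.1 u; rw [if_neg huw] at this; omega
      have hxn : x (lsNext G ξ y u) = y (lsNext G ξ y u) := by
        have := hInv.1 (lsNext G ξ y u); rw [if_neg hnw] at this; omega
      have hfixx : lsNext G ξ x u ≠ u := by
        rw [hnext]; exact hfix
      rw [lsPlace_step hfix, lsPlace_step hfixx, hnext]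
      exact ih _ (by omega)

/-- One-step preservation of the invariant. -/
lemma lsInv.step (hξ : ∀ v, (ξ v).Nodup ∧ ∀ w, w ∈ ξ v ↔ G.Adj v w)
    (hInv : lsInv G x y w) (u : V) :
    ∃ w', lsInv G (lsAdd G ξ x u) (lsAdd G ξ y u) w' := by
  by_cases hp : lsPlace G ξ y u = w
  · refine ⟨lsPlace G ξ x u, ?_, ?_⟩
    · intro v
      have h1 := hInv.1 v
      simp only [lsAdd, hp]
      split_ifs at h1 ⊢ <;> omega
    · intro v hadj
      have hq := lsPlace_localMin hξ (x := x) (u := u) hadj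
      have h1 := hInv.1 v
      have h2 := hInv.1 (lsPlace G ξ x u)
      simp only [lsAdd, hp]
      split_ifs at h1 h2 ⊢ <;> omega
  · have hq : lsPlace G ξ x u = lsPlace G ξ y u :=
      (hInv.place hξ (y u) u le_rfl).resolve_right hp
    refine ⟨w, ?_, ?_⟩
    · intro v
      have h1 := hInv.1 v
      simp only [lsAdd, hq]
      split_ifs at h1 ⊢ <;> omega
    · intro v hadj
      have h2 := hInv.2 v hadj
      simp only [lsAdd]
      have hwp : w ≠ lsPlace G ξ y u := fun h => hp h.symm
      rw [if_neg hwp]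
      split_ifs <;> omega

lemma lsInv.foldl (hξ : ∀ v, (ξ v).Nodup ∧ ∀ w, w ∈ ξ v ↔ G.Adj v w) :
    ∀ (l : List V) (x y : V → ℕ) (w : V), lsInv G x y w →
      ∃ w', lsInv G (l.foldl (lsAdd G ξ) x) (l.foldl (lsAdd G ξ) y) w' := by
  intro l
  induction l with
  | nil => intro x y w h; exact ⟨w, h⟩
  | cons u t ih =>
    intro x y w h
    obtain ⟨w', h'⟩ := h.step hξ u
    exact ih _ _ _ h'

lemma lsInv_lsAdd (hξ : ∀ v, (ξ v).Nodup ∧ ∀ w, w ∈ ξ v ↔ G.Adj v w)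
    (c : V → ℕ) (u : V) : lsInv G (lsAdd G ξ c u) c (lsPlace G ξ c u) :=
  ⟨fun _ => rfl, fun v hadj => lsPlace_localMin hξ hadj⟩


end Aux

/-- **Monotonicity of local search allocation.**
With a fixed deterministic tie-breaking rule `ξ`, removing the `i`-th ball changes the
load vector by exactly `1` in `ℓ¹`-norm; in particular removing a ball never increases
the load of any vertex. -/
theorem lsLoads_monotonicity (G : SimpleGraph V) [DecidableRel G.Adj]
    (ξ : V → List V)
    (hξ : ∀ v, (ξ v).Nodup ∧ ∀ w, w ∈ ξ v ↔ G.Adj v w)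
    (bs : List V) (i : ℕ) (hi : i < bs.length) :
    (∑ v, |(lsLoads G ξ bs v : ℤ) - (lsLoads G ξ (bs.eraseIdx i) v : ℤ)| = 1) ∧
      ∀ v, lsLoads G ξ (bs.eraseIdx i) v ≤ lsLoads G ξ bs v := by

  set c : V → ℕ := (bs.take i).foldl (lsAdd G ξ) (fun _ => 0) with hc
  have hX : lsLoads G ξ bs = (bs.drop (i+1)).foldl (lsAdd G ξ) (lsAdd G ξ c bs[i]) := by
    conv_lhs => rw [lsLoads, show bs = bs.take i ++ bs[i] :: bs.drop (i+1) by
      rw [← List.drop_eq_getElem_cons hi, List.take_append_drop]]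
    rw [List.foldl_append, List.foldl_cons]
  have hZ : lsLoads G ξ (bs.eraseIdx i) = (bs.drop (i+1)).foldl (lsAdd G ξ) c := by
    rw [lsLoads, List.eraseIdx_eq_take_drop_succ, List.foldl_append]
  obtain ⟨w, hw⟩ := lsInv.foldl hξ (bs.drop (i+1)) _ _ _ (lsInv_lsAdd hξ c bs[i])
  rw [hX, hZ]
  constructor
  · have h1 : ∀ v, |((bs.drop (i+1)).foldl (lsAdd G ξ) (lsAdd G ξ c bs[i]) v : ℤ)
        - ((bs.drop (i+1)).foldl (lsAdd G ξ) c v : ℤ)| = if v = w then 1 else 0 := by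
      intro v
      have := hw.1 v
      split_ifs at this ⊢ <;> [skip; skip] <;> rw [this] <;> push_cast <;> simp
    rw [Finset.sum_congr rfl fun v _ => h1 v]
    simp
  · intro v
    have := hw.1 v
    omega
end

section
/- (Grid upper-bound contradiction inequality) Let d ≥ 1 be constant and α ≥ 16e(16d)^d(d+1)(log n / log log n)^{1/(d+1)}. Suppose in the d-dimensional torus grid a vertex u has load at least α/2 and every vertex of B̃_u^{α/(4d)} has load at least α/2 − d·(α/(4d)) = α/4 (by smoothness along ℓ1 paths). Then the total load in B̃_u^{2α} is at least (α/(2d))^d · (α/4) ≥ 4e(d+1)(log n/log log n)^{1/(d+1)}·(8α)^d, which exceeds the bound 4e(d+1)(log n/log log n)^{1/(d+1)}·(6α)^d on the number of balls born in B̃_u^{2α}. -/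
open Finset
open scoped Classical

/-- Cyclic distance on `{0,...,m-1}`: `min {|a−b|, m−|a−b|}`. -/
def cdist {m : ℕ} (a b : Fin m) : ℕ :=
  min ((a.1 + m - b.1) % m) ((b.1 + m - a.1) % m)

/-- The graph distance of the `d`-dimensional torus grid on `(Fin m)^d`:
`dist(u,v) = Σ_i min{|u_i−v_i|, m−|u_i−v_i|}`. -/
def tdist {d m : ℕ} (u v : Fin d → Fin m) : ℕ :=
  ∑ i, cdist (u i) (v i)

lemma mod_cases3 (m t : ℕ) (h : t < 3 * m) :
    (t < m ∧ t % m = t) ∨ (m ≤ t ∧ t < 2*m ∧ t % m = t - m) ∨ (2*m ≤ t ∧ t % m = t - 2*m) := by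
  rcases lt_or_ge t m with h1 | h1
  · exact Or.inl ⟨h1, Nat.mod_eq_of_lt h1⟩
  rcases lt_or_ge t (2*m) with h2 | h2
  · exact Or.inr (Or.inl ⟨h1, h2, by rw [Nat.mod_eq_sub_mod h1, Nat.mod_eq_of_lt (by omega)]⟩)
  · refine Or.inr (Or.inr ⟨h2, ?_⟩)
    rw [Nat.mod_eq_sub_mod h1, Nat.mod_eq_sub_mod (by omega), Nat.mod_eq_of_lt (by omega)]
    omega

lemma one_dim (m r : ℕ) (hm : 2*r+1 ≤ m) (a : Fin m) :
    2*r+1 ≤ (univ.filter fun x : Fin m => cdist a x ≤ r).card := by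
  have hm0 : 0 < m := by omega
  have ha := a.2
  have key := Finset.card_le_card_of_injOn
      (f := fun j : ℕ => (⟨(a.1 + (m - r) + j) % m, Nat.mod_lt _ hm0⟩ : Fin m))
      (s := Finset.range (2*r+1))
      (t := univ.filter fun x : Fin m => cdist a x ≤ r)
      ?_ ?_
  · simpa using key
  · intro j hj
    simp only [Finset.coe_range, Set.mem_Iio] at hj
    simp only [Finset.mem_coe, Finset.mem_filter_univ]
    simp only [Finset.mem_coe, Set.mem_ofPred_eq, Finset.mem_filter, Finset.mem_univ, true_and, cdist, Fin.val_mk]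
    have h1 := mod_cases3 m (a.1 + (m - r) + j) (by omega)
    have hxlt : (a.1 + (m - r) + j) % m < m := Nat.mod_lt _ hm0
    generalize hgen : (a.1 + (m - r) + j) % m = x at h1 hxlt ⊢
    have h2 := mod_cases3 m (a.1 + m - x) (by omega)
    have h3 := mod_cases3 m (x + m - a.1) (by omega)
    rw [inf_le_iff]
    omega
  · intro j1 hj1 j2 hj2 hEq
    simp only [Finset.coe_range, Set.mem_Iio] at hj1 hj2
    have hv : (a.1 + (m - r) + j1) % m = (a.1 + (m - r) + j2) % m :=
      congrArg Fin.val hEq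
    have h1 := mod_cases3 m (a.1 + (m - r) + j1) (by omega)
    have h2 := mod_cases3 m (a.1 + (m - r) + j2) (by omega)
    omega

lemma ball_card (d m r : ℕ) (hm : 2*r+1 ≤ m) (u : Fin d → Fin m) :
    (2*r+1)^d ≤ (univ.filter fun v : Fin d → Fin m => ∀ i, cdist (u i) (v i) ≤ r).card := by
  classical
  have hprod : (univ.filter fun v : Fin d → Fin m => ∀ i, cdist (u i) (v i) ≤ r).card
      = ∏ i, (univ.filter fun x : Fin m => cdist (u i) x ≤ r).card := by
    rw [← Fintype.card_subtype]
    rw [Fintype.card_congr (Equiv.subtypePiEquivPi (p := fun i x => cdist (u i) x ≤ r))]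
    rw [Fintype.card_pi]
    simp [Fintype.card_subtype]
  rw [hprod]
  calc (2*r+1)^d = ∏ _i : Fin d, (2*r+1) := by simp
    _ ≤ _ := Finset.prod_le_prod' (fun i _ => one_dim m r hm (u i))

/-- **Grid upper-bound contradiction inequality.**
Let `d ≥ 1` be constant and `α ≥ 16e(16d)^d(d+1)(log n/log log n)^{1/(d+1)}` (for
convenience `α` is taken divisible by `4d`, and the grid side `m` is large enough
that the `ℓ∞`-ball of radius `α/(4d)` does not wrap around).  If in the
`d`-dimensional torus grid on `n = m^d` vertices the vertex `u` has load at least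
`α/2` and every vertex of the `ℓ∞`-ball of radius `α/(4d)` around `u` has load at
least `α/4`, then the total load in the `ℓ∞`-ball of radius `2α` around `u` strictly
exceeds `4e(d+1)(log n/log log n)^{1/(d+1)}·(6α)^d` (the high-probability upper
bound for the number of balls born there). -/
theorem torus_upper_bound_contradiction (d m n : ℕ) (hd : 1 ≤ d) (hn : n = m ^ d)
    (hLL : 0 < Real.log (Real.log n))
    (α : ℕ) (hdvd : 4 * d ∣ α)
    (hα : 16 * Real.exp 1 * (16 * d : ℝ) ^ d * (d + 1) *
        (Real.log n / Real.log (Real.log n)) ^ ((1 : ℝ) / (d + 1)) ≤ (α : ℝ))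
    (hm : 2 * (α / (4 * d)) + 1 ≤ m)
    (X : (Fin d → Fin m) → ℕ) (u : Fin d → Fin m)
    (hu : (α : ℝ) / 2 ≤ (X u : ℝ))
    (hsmall : ∀ v : Fin d → Fin m,
      (∀ i, cdist (u i) (v i) ≤ α / (4 * d)) → (α : ℝ) / 4 ≤ (X v : ℝ)) :
    4 * Real.exp 1 * (d + 1) *
        (Real.log n / Real.log (Real.log n)) ^ ((1 : ℝ) / (d + 1)) *
        (6 * α : ℝ) ^ d
      < ∑ v ∈ univ.filter (fun v : Fin d → Fin m => ∀ i, cdist (u i) (v i) ≤ 2 * α),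
          (X v : ℝ) := by
  classical
  set L : ℝ := (Real.log n / Real.log (Real.log n)) ^ ((1 : ℝ) / (d + 1)) with hLdef
  -- positivity of L
  have h0 : (0:ℝ) ≤ Real.log n := Real.log_natCast_nonneg n
  have hlog1 : 1 < Real.log n := by
    by_contra h
    push_neg at h
    exact absurd (Real.log_nonpos h0 h) (not_le.2 hLL)
  have hL : 0 < L := Real.rpow_pos_of_pos (div_pos (by linarith) hLL) _
  have hdR : (1:ℝ) ≤ (d:ℝ) := by exact_mod_cast hd
  have hαpos : (0:ℝ) < (α:ℝ) := by
    refine lt_of_lt_of_le ?_ hα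
    have : (0:ℝ) < (16 * d : ℝ) ^ d := by positivity
    positivity
  obtain ⟨k, hk⟩ := hdvd
  have hd0 : 0 < 4 * d := by omega
  have hr : α / (4 * d) = k := by rw [hk]; exact Nat.mul_div_cancel_left k hd0
  rw [hr] at hm hsmall
  have hαk : α = 4 * d * k := hk
  -- sets
  set S := univ.filter fun v : Fin d → Fin m => ∀ i, cdist (u i) (v i) ≤ k with hS
  set T := univ.filter fun v : Fin d → Fin m => ∀ i, cdist (u i) (v i) ≤ 2 * α with hT
  have hkα : k ≤ α := by rw [hαk]; exact Nat.le_mul_of_pos_left k (by omega)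
  have hST : S ⊆ T := by
    intro v hv
    simp only [hS, hT, Finset.mem_filter, Finset.mem_univ, true_and] at hv ⊢
    intro i
    exact le_trans (hv i) (by omega)
  have hcard : (2*k+1)^d ≤ S.card := ball_card d m k hm u
  have hsum2 : (S.card : ℝ) * ((α:ℝ)/4) ≤ ∑ v ∈ S, (X v : ℝ) := by
    have := Finset.card_nsmul_le_sum S (fun v => (X v : ℝ)) ((α:ℝ)/4)
      (fun v hv => hsmall v (by
        simp only [hS, Finset.mem_filter, Finset.mem_univ, true_and] at hv
        exact hv))
    simpa [nsmul_eq_mul] using this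
  have hsum1 : ∑ v ∈ S, (X v : ℝ) ≤ ∑ v ∈ T, (X v : ℝ) :=
    Finset.sum_le_sum_of_subset_of_nonneg hST (fun v _ _ => by positivity)
  -- the key strict inequality
  have h2k : ((2*k+1 : ℕ) : ℝ) = 2*(k:ℝ)+1 := by push_cast; ring
  have hαk' : (α:ℝ) = 4*(d:ℝ)*(k:ℝ) := by exact_mod_cast congrArg (Nat.cast : ℕ → ℝ) hαk
  have hkpos : (0:ℝ) < (k:ℝ) := by
    rcases Nat.eq_zero_or_pos k with h | h
    · exfalso; rw [h, Nat.mul_zero] at hαk; rw [hαk] at hαpos; simp at hαpos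
    · exact_mod_cast h
  have key : 4 * Real.exp 1 * ((d:ℝ) + 1) * L * (6 * (α:ℝ)) ^ d
      < (2*(k:ℝ)) ^ d * ((α:ℝ)/4) := by
    have hE : (0:ℝ) < Real.exp 1 * ((d:ℝ)+1) * L := by positivity
    have hαd : (0:ℝ) < (α:ℝ)^d := by positivity
    have h2kα : (2*(k:ℝ)) = (α:ℝ) / (2*(d:ℝ)) := by
      rw [hαk']; field_simp; ring
    have hpow : ((12:ℝ)*(d:ℝ))^d < ((16:ℝ)*(d:ℝ))^d := by
      apply pow_lt_pow_left₀ (by linarith) (by positivity)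
      omega
    have hmain : (16 * Real.exp 1 * ((d:ℝ)+1) * L) * ((12*(d:ℝ))^d * (α:ℝ)^d)
        < (α:ℝ) * (α:ℝ)^d := by
      have step1 : (16 * Real.exp 1 * ((d:ℝ)+1) * L) * ((12*(d:ℝ))^d * (α:ℝ)^d)
          < (16 * Real.exp 1 * ((d:ℝ)+1) * L) * ((16*(d:ℝ))^d * (α:ℝ)^d) := by
        apply mul_lt_mul_of_pos_left _ (by positivity)
        exact mul_lt_mul_of_pos_right hpow hαd
      have step2 : (16 * Real.exp 1 * ((d:ℝ)+1) * L) * ((16*(d:ℝ))^d * (α:ℝ)^d)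
          ≤ (α:ℝ) * (α:ℝ)^d := by
        have h' : 16 * Real.exp 1 * (16 * (d:ℝ)) ^ d * ((d:ℝ) + 1) * L ≤ (α:ℝ) := hα
        calc (16 * Real.exp 1 * ((d:ℝ)+1) * L) * ((16*(d:ℝ))^d * (α:ℝ)^d)
            = (16 * Real.exp 1 * (16 * (d:ℝ)) ^ d * ((d:ℝ) + 1) * L) * (α:ℝ)^d := by ring
          _ ≤ (α:ℝ) * (α:ℝ)^d := mul_le_mul_of_nonneg_right h' (le_of_lt hαd)
      linarith
    -- convert hmain into the key inequality
    rw [h2kα, div_pow]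
    rw [div_mul_div_comm, lt_div_iff₀ (by positivity)]
    calc 4 * Real.exp 1 * ((d:ℝ) + 1) * L * (6 * (α:ℝ)) ^ d * ((2*(d:ℝ))^d * 4)
        = (16 * Real.exp 1 * ((d:ℝ)+1) * L) * ((6*(α:ℝ))^d * (2*(d:ℝ))^d) := by ring
      _ = (16 * Real.exp 1 * ((d:ℝ)+1) * L) * ((12*(d:ℝ))^d * (α:ℝ)^d) := by
          rw [← mul_pow, ← mul_pow]; ring_nf
      _ < (α:ℝ) * (α:ℝ)^d := hmain
      _ = (α:ℝ)^d * (α:ℝ) := by ring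
  calc 4 * Real.exp 1 * ((d:ℝ) + 1) * L * (6 * (α:ℝ)) ^ d
      < (2*(k:ℝ)) ^ d * ((α:ℝ)/4) := key
    _ ≤ ((2*k+1 : ℕ):ℝ) ^ d * ((α:ℝ)/4) := by
        apply mul_le_mul_of_nonneg_right _ (by positivity)
        apply pow_le_pow_left₀ (by positivity)
        rw [h2k]; linarith
    _ ≤ (S.card : ℝ) * ((α:ℝ)/4) := by
        apply mul_le_mul_of_nonneg_right _ (by positivity)
        calc ((2*k+1 : ℕ):ℝ)^d = (((2*k+1)^d : ℕ) : ℝ) := by push_cast; ring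
          _ ≤ (S.card : ℝ) := by exact_mod_cast hcard
    _ ≤ ∑ v ∈ S, (X v : ℝ) := hsum2
    _ ≤ ∑ v ∈ T, (X v : ℝ) := hsum1
end
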